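/- arXiv:2106.15260 — 2 statements merged into one kernel-verified Lean document; each statement's English description precedes it below -/
import Mathlib

section
/- Let K ≥ 2 be an integer and let r, s be positive integers with r < K and s < K. Then ∑_{n=0}^{2K-2s} C(2K-2r, 2K-2s-n+1) · C(n+2s-2, n) · B_n = -∑_{n=0}^{2K-2s} C(2r-1, 2K-2s-n+1) · C(n+2s-2, n) · B_n, where B_n are the Bernoulli numbers and C(a,b) are binomial coefficients (with C(a,b) = 0 when a < b for integer a ≥ 0). -/
open Finset

private def W (c n : ℕ) : ℚ := ((n + c).choose n : ℚ) * bernoulli n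

private def S (c M a : ℕ) : ℚ :=
  ∑ n ∈ Finset.range (M + 2), (a.choose (M + 1 - n) : ℚ) * W c n

private lemma S_succ (c M a : ℕ) : S c (M + 1) (a + 1) = S c (M + 1) a + S c M a := by
  simp only [S]
  rw [Finset.sum_range_succ]
  conv_rhs => rw [Finset.sum_range_succ]
  have h : ∀ n ∈ Finset.range (M + 2),
      ((a + 1).choose (M + 1 + 1 - n) : ℚ) * W c n
        = (a.choose (M + 1 + 1 - n) : ℚ) * W c n + (a.choose (M + 1 - n) : ℚ) * W c n := by
    intro n hn
    rw [Finset.mem_range] at hn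
    have h2 : M + 1 + 1 - n = (M + 1 - n) + 1 := by omega
    rw [h2, Nat.choose_succ_succ]
    push_cast
    ring
  rw [Finset.sum_congr rfl h, Finset.sum_add_distrib]
  have h3 : M + 1 + 1 - (M + 2) = 0 := by omega
  rw [h3]
  simp only [Nat.choose_zero_right]
  ring

private lemma S_zero (c M : ℕ) : S c M 0 = W c (M + 1) := by
  simp only [S]
  rw [Finset.sum_range_succ]
  have h : ∀ n ∈ Finset.range (M + 1), ((0 : ℕ).choose (M + 1 - n) : ℚ) * W c n = 0 := by
    intro n hn
    rw [Finset.mem_range] at hn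
    have : M + 1 - n ≠ 0 := by omega
    rcases Nat.exists_eq_succ_of_ne_zero this with ⟨k, hk⟩
    rw [hk, Nat.choose_zero_succ]
    simp
  rw [Finset.sum_eq_zero h]
  have h4 : M + 1 - (M + 1) = 0 := by omega
  rw [h4]
  simp

private lemma S_top (c M : ℕ) (hM : 1 ≤ M) : S c M (M + c + 1) = W c (M + 1) := by
  have key : ∀ n ∈ Finset.range (M + 2),
      ((M + c + 1).choose (M + 1 - n) : ℚ) * W c n
        = ((M + c + 1).choose (M + 1) : ℚ) * (((M + 1).choose n : ℚ) * bernoulli n) := by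
    intro n hn
    rw [Finset.mem_range] at hn
    have h1 : (M + c + 1).choose (M + 1 - n) = (M + c + 1).choose (n + c) := by
      have h2 : n + c ≤ M + c + 1 := by omega
      rw [← Nat.choose_symm h2]
      congr 1
      omega
    have h3 : (n + c).choose n = (n + c).choose c := by
      rw [← Nat.choose_symm (by omega : n ≤ n + c)]
      congr 1
      omega
    have h4 := Nat.choose_mul (n := M + c + 1) (k := n + c) (show c ≤ n + c by omega)
    have h5 : M + c + 1 - c = M + 1 := by omega
    have h6 : n + c - c = n := by omega
    rw [h5, h6] at h4
    have h7 : (M + c + 1).choose c = (M + c + 1).choose (M + 1) := by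
      rw [← Nat.choose_symm (by omega : c ≤ M + c + 1)]
      congr 1
    rw [W, h1, h3]
    rw [← mul_assoc, ← Nat.cast_mul, h4, h7, Nat.cast_mul]
    ring
  rw [S, Finset.sum_congr rfl key, ← Finset.mul_sum]
  rw [Finset.sum_range_succ]
  have h8 : ∑ n ∈ Finset.range (M + 1), ((M + 1).choose n : ℚ) * bernoulli n = 0 := by
    rw [sum_bernoulli, if_neg (by omega)]
  rw [h8, zero_add, Nat.choose_self, W]
  have h9 : (M + 1 + c).choose (M + 1) = (M + c + 1).choose (M + 1) := by
    congr 1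
    omega
  rw [h9]
  push_cast
  ring

private lemma key_lemma (c : ℕ) : ∀ M, 1 ≤ M → ∀ a, a ≤ M + c + 1 →
    S c M a + (-1 : ℚ) ^ M * S c M (M + c + 1 - a) = 0 := by
  intro M hM
  induction M, hM using Nat.le_induction with
  | base =>
    intro a ha
    have hc2 : (1 : ℕ) + c + 1 = c + 2 := by omega
    have expand : ∀ x : ℕ, S c 1 x
        = (x : ℚ) * ((x : ℚ) - 1) / 2 - (x : ℚ) * ((c : ℚ) + 1) / 2 + W c 2 := by
      intro x
      show (∑ n ∈ Finset.range 3, (x.choose (1 + 1 - n) : ℚ) * W c n) = _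
      rw [Finset.sum_range_succ, Finset.sum_range_succ, Finset.sum_range_succ,
        Finset.sum_range_zero]
      norm_num [W, Nat.cast_choose_two, bernoulli_one, bernoulli_zero,
        Nat.choose_one_right]
      ring
    rw [expand, expand]
    have hb : ((1 + c + 1 - a : ℕ) : ℚ) = (c : ℚ) + 2 - (a : ℚ) := by
      have : (1 + c + 1 - a : ℕ) + a = c + 2 := by omega
      have := congrArg (fun n : ℕ => (n : ℚ)) this
      push_cast at this
      linarith
    rw [hb]
    ring
  | succ M hM ih =>
    intro a
    induction a with
    | zero =>
      intro ha
      rw [Nat.sub_zero, S_zero, S_top c (M + 1) (by omega)]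
      rcases Nat.even_or_odd (M + 1) with he | ho
      · rw [he.neg_one_pow, one_mul, W]
        have hodd : Odd (M + 1 + 1) := Even.add_one he
        rw [bernoulli_eq_bernoulli'_of_ne_one (by omega),
          bernoulli'_eq_zero_of_odd hodd (by omega)]
        ring
      · rw [ho.neg_one_pow]
        ring
    | succ a iha =>
      intro ha
      have ha' : a ≤ M + c + 1 := by omega
      have hsub1 : M + 1 + c + 1 - (a + 1) = M + c + 1 - a := by omega
      have hsub2 : M + 1 + c + 1 - a = (M + c + 1 - a) + 1 := by omega
      have hDa := iha (by omega)
      rw [hsub2] at hDa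
      rw [hsub1, S_succ]
      rw [S_succ c M (M + c + 1 - a)] at hDa
      have hIH := ih a ha'
      rcases Nat.even_or_odd M with he | ho
      · rw [he.neg_one_pow] at hIH
        rw [(Even.add_one he).neg_one_pow] at hDa ⊢
        linarith
      · rw [ho.neg_one_pow] at hIH
        rw [(Odd.add_one ho).neg_one_pow] at hDa ⊢
        linarith

theorem two_sums_equal (K r s : ℕ) (hK : 2 ≤ K) (hr1 : 1 ≤ r) (hr2 : r ≤ K - 1)
    (hs1 : 1 ≤ s) (hs2 : s ≤ K - 1) :
    ∑ n ∈ Finset.range (2 * K - 2 * s + 1),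
        ((2 * K - 2 * r).choose (2 * K - 2 * s - n + 1) : ℚ) *
          ((n + 2 * s - 2).choose n : ℚ) * bernoulli n =
      -∑ n ∈ Finset.range (2 * K - 2 * s + 1),
          ((2 * r - 1).choose (2 * K - 2 * s - n + 1) : ℚ) *
            ((n + 2 * s - 2).choose n : ℚ) * bernoulli n := by
  set c : ℕ := 2 * s - 2 with hc
  set M : ℕ := 2 * K - 2 * s with hMdef
  have hs2' : 2 * s ≤ 2 * K - 2 := by omega
  have hr2' : 2 * r ≤ 2 * K - 2 := by omega
  have hM2 : 2 ≤ M := by omega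
  have hBM1 : bernoulli (M + 1) = 0 := by
    have hModd : Odd (M + 1) := by
      have : Even M := by
        refine ⟨K - s, ?_⟩
        omega
      exact Even.add_one this
    rw [bernoulli_eq_bernoulli'_of_ne_one (by omega)]
    exact bernoulli'_eq_zero_of_odd hModd (by omega)
  have conv : ∀ x : ℕ,
      (∑ n ∈ Finset.range (M + 1),
        (x.choose (M - n + 1) : ℚ) *
          ((n + 2 * s - 2).choose n : ℚ) * bernoulli n) = S c M x := by
    intro x
    simp only [S]
    conv_rhs => rw [Finset.sum_range_succ]
    have hlast : (x.choose (M + 1 - (M + 1)) : ℚ) * W c (M + 1) = 0 := by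
      rw [W, hBM1]
      ring
    rw [hlast, add_zero]
    apply Finset.sum_congr rfl
    intro n hn
    rw [Finset.mem_range] at hn
    have h1 : M - n + 1 = M + 1 - n := by omega
    have h2 : n + 2 * s - 2 = n + c := by omega
    rw [h1, h2, W]
    ring
  rw [conv, conv]
  have hkey := key_lemma c M (by omega) (2 * K - 2 * r) (by omega)
  have heq1 : M + c + 1 - (2 * K - 2 * r) = 2 * r - 1 := by omega
  have heven : Even M := ⟨K - s, by omega⟩
  rw [heq1, heven.neg_one_pow, one_mul] at hkey
  linarith
end

section
/- Let K ≥ 2 and let 1 ≤ s ≤ s' ≤ K-1 with s ≤ s'. With B_{r,s'} = C(2K-2s', 2r-1) and P_{s,r} = (2/(2s-1)) ∑_{n=0}^{2K-2s} C(2r-1, 2K-2s-n+1) C(n+2s-2, n) B_n, one has (PB)_{s,s'} = ∑_{r=1}^{K-1} P_{s,r} B_{r,s'} = (2/(2s-1)) ∑_{n=2s'-2s+2}^{2K-2s} C(2K-2s', 2s-2s'+n-1) · C(n+2s-2, n) · 2^{2s-2s'+n-2} · B_n. -/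
open Finset

lemma bernoulli_odd_zero {n : ℕ} (h : Odd n) (h1 : 1 < n) : (bernoulli n : ℚ) = 0 := by
  rw [bernoulli_eq_bernoulli'_of_ne_one (by omega), bernoulli'_eq_zero_of_odd h h1]

lemma even_choose_sum (N L : ℕ) (hN : 1 ≤ N) (hL : N < 2 * L) :
    ∑ t ∈ Finset.range L, (N.choose (2 * t) : ℚ) = 2 ^ (N - 1) := by
  have h1 : ∑ i ∈ range (N + 1), (N.choose i : ℚ) = 2 ^ N := by
    exact_mod_cast congrArg (Nat.cast : ℕ → ℚ) (Nat.sum_range_choose N)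
  have h2 : ∑ i ∈ range (N + 1), ((-1 : ℚ)) ^ i * (N.choose i : ℚ) = 0 := by
    have := Int.alternating_sum_range_choose_of_ne (n := N) (by omega)
    exact_mod_cast congrArg (Int.cast : ℤ → ℚ) this
  -- restrict to range (N/2+1)
  have hsub : ∑ t ∈ Finset.range L, (N.choose (2 * t) : ℚ)
      = ∑ t ∈ Finset.range (N / 2 + 1), (N.choose (2 * t) : ℚ) := by
    symm
    apply Finset.sum_subset (Finset.range_subset_range.mpr (by omega))
    intro t _ ht
    have : N < 2 * t := by simp only [mem_range] at *; omega
    rw [Nat.choose_eq_zero_of_lt this]; simp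
  rw [hsub]
  have hbij : ∑ t ∈ Finset.range (N / 2 + 1), (N.choose (2 * t) : ℚ)
      = ∑ i ∈ (range (N + 1)).filter (fun i => Even i), (N.choose i : ℚ) := by
    apply Finset.sum_nbij' (fun t => 2 * t) (fun i => i / 2)
    · intro t ht; simp only [mem_range, mem_filter] at *
      exact ⟨by omega, ⟨t, by omega⟩⟩
    · intro i hi; simp only [mem_range, mem_filter] at *
      obtain ⟨h, k, hk⟩ := hi; omega
    · intro t ht; omega
    · intro i hi; simp only [mem_range, mem_filter] at hi
      obtain ⟨h, k, hk⟩ := hi; omega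
    · intro t _; rfl
  rw [hbij]
  have key : (2 : ℚ) * ∑ i ∈ (range (N + 1)).filter (fun i => Even i), (N.choose i : ℚ)
      = 2 ^ N := by
    have expand : ∀ i ∈ range (N + 1),
        (N.choose i : ℚ) + (-1 : ℚ) ^ i * (N.choose i : ℚ)
          = if Even i then 2 * (N.choose i : ℚ) else 0 := by
      intro i _
      rcases Nat.even_or_odd i with h | h
      · rw [if_pos h, h.neg_one_pow]; ring
      · rw [if_neg (Nat.not_even_iff_odd.mpr h), h.neg_one_pow]; ring
    have : ∑ i ∈ range (N + 1),
        ((N.choose i : ℚ) + (-1 : ℚ) ^ i * (N.choose i : ℚ)) = 2 ^ N := by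
      rw [Finset.sum_add_distrib, h1, h2, add_zero]
    rw [Finset.sum_congr rfl expand] at this
    rw [Finset.sum_filter, Finset.mul_sum]
    rw [← this]
    apply Finset.sum_congr rfl
    intro i _; split <;> simp
  have h2ne : (2 : ℚ) ≠ 0 := by norm_num
  have : ∑ i ∈ (range (N + 1)).filter (fun i => Even i), (N.choose i : ℚ)
      = 2 ^ N / 2 := by field_simp at key ⊢; linarith
  rw [this, div_eq_iff h2ne, ← pow_succ]
  congr 1
  omega

lemma key_sum (K M j : ℕ) (hK : 2 ≤ K) (hM : M ≤ 2 * K - 2) (hj : Odd j) (hjM : j < M) :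
    ∑ r ∈ Finset.Icc 1 (K - 1), ((2 * r - 1).choose j : ℚ) * (M.choose (2 * r - 1) : ℚ)
      = (M.choose j : ℚ) * 2 ^ (M - j - 1) := by
  obtain ⟨a, ha⟩ := hj
  have hstep : ∑ r ∈ Finset.Icc 1 (K - 1),
        ((2 * r - 1).choose j : ℚ) * (M.choose (2 * r - 1) : ℚ)
      = ∑ r ∈ Finset.Icc (a + 1) (K - 1),
        ((2 * r - 1).choose j : ℚ) * (M.choose (2 * r - 1) : ℚ) := by
    symm
    apply Finset.sum_subset
    · intro r hr; simp only [mem_Icc] at *; omega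
    · intro r hr hr'; simp only [mem_Icc] at hr hr'
      have : 2 * r - 1 < j := by omega
      rw [Nat.choose_eq_zero_of_lt this]; simp
  rw [hstep]
  have hterm : ∀ r ∈ Finset.Icc (a + 1) (K - 1),
      ((2 * r - 1).choose j : ℚ) * (M.choose (2 * r - 1) : ℚ)
        = (M.choose j : ℚ) * ((M - j).choose (2 * (r - a - 1)) : ℚ) := by
    intro r hr
    simp only [mem_Icc] at hr
    have hjr : j ≤ 2 * r - 1 := by omega
    have hidx : 2 * r - 1 - j = 2 * (r - a - 1) := by omega
    rcases le_or_gt (2 * r - 1) M with h | h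
    · have := Nat.choose_mul (n := M) (k := 2 * r - 1) (s := j) hjr
      rw [← hidx, mul_comm]
      exact_mod_cast congrArg (Nat.cast : ℕ → ℚ) this
    · rw [Nat.choose_eq_zero_of_lt h,
        Nat.choose_eq_zero_of_lt (show M - j < 2 * (r - a - 1) by omega)]
      simp
  rw [Finset.sum_congr rfl hterm, ← Finset.mul_sum]
  congr 1
  have hre : ∑ r ∈ Finset.Icc (a + 1) (K - 1), ((M - j).choose (2 * (r - a - 1)) : ℚ)
      = ∑ t ∈ Finset.range (K - 1 - a), ((M - j).choose (2 * t) : ℚ) := by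
    apply Finset.sum_nbij' (fun r => r - a - 1) (fun t => t + a + 1)
    · intro r hr; simp only [mem_Icc, mem_range] at *; omega
    · intro t ht; simp only [mem_Icc, mem_range] at *; omega
    · intro r hr; simp only [mem_Icc] at hr; omega
    · intro t _; omega
    · intro r _; rfl
  rw [hre]
  rw [even_choose_sum (M - j) (K - 1 - a) (by omega) (by omega)]

lemma zero_sum (K M j : ℕ) (hM : Even M) (hj : M ≤ j) :
    ∑ r ∈ Finset.Icc 1 (K - 1), ((2 * r - 1).choose j : ℚ) * (M.choose (2 * r - 1) : ℚ)
      = 0 := by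
  apply Finset.sum_eq_zero
  intro r hr
  simp only [mem_Icc] at hr
  rcases lt_or_ge (2 * r - 1) j with h | h
  · rw [Nat.choose_eq_zero_of_lt h]; simp
  · have hne : 2 * r - 1 ≠ M := by
      intro hEq
      obtain ⟨k, hk⟩ := hM
      omega
    have : M < 2 * r - 1 := by omega
    rw [Nat.choose_eq_zero_of_lt this]; simp

theorem PB_le (K s s' : ℕ) (hK : 2 ≤ K) (hs : 1 ≤ s) (hss' : s ≤ s') (hs' : s' ≤ K - 1) :
    ∑ r ∈ Finset.Icc 1 (K - 1),
        ((2 / (2 * (s : ℚ) - 1)) *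
            ∑ n ∈ Finset.range (2 * K - 2 * s + 1),
              ((2 * r - 1).choose (2 * K - 2 * s - n + 1) : ℚ) *
                ((n + 2 * s - 2).choose n : ℚ) * bernoulli n) *
          ((2 * K - 2 * s').choose (2 * r - 1) : ℚ) =
      (2 / (2 * (s : ℚ) - 1)) *
        ∑ n ∈ Finset.Icc (2 * s' - 2 * s + 2) (2 * K - 2 * s),
          ((2 * K - 2 * s').choose (2 * s + n - 2 * s' - 1) : ℚ) *
            ((n + 2 * s - 2).choose n : ℚ) * 2 ^ (2 * s + n - 2 * s' - 2) * bernoulli n := by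
  set c : ℚ := 2 / (2 * (s : ℚ) - 1) with hc
  set M : ℕ := 2 * K - 2 * s' with hM
  calc ∑ r ∈ Finset.Icc 1 (K - 1),
        (c * ∑ n ∈ Finset.range (2 * K - 2 * s + 1),
              ((2 * r - 1).choose (2 * K - 2 * s - n + 1) : ℚ) *
                ((n + 2 * s - 2).choose n : ℚ) * bernoulli n) *
          (M.choose (2 * r - 1) : ℚ)
      = ∑ r ∈ Finset.Icc 1 (K - 1), ∑ n ∈ Finset.range (2 * K - 2 * s + 1),
          c * (((2 * r - 1).choose (2 * K - 2 * s - n + 1) : ℚ) *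
                ((n + 2 * s - 2).choose n : ℚ) * bernoulli n *
              (M.choose (2 * r - 1) : ℚ)) := by
        refine Finset.sum_congr rfl fun r _ => ?_
        rw [mul_assoc, Finset.sum_mul, Finset.mul_sum]
    _ = ∑ n ∈ Finset.range (2 * K - 2 * s + 1), ∑ r ∈ Finset.Icc 1 (K - 1),
          c * (((2 * r - 1).choose (2 * K - 2 * s - n + 1) : ℚ) *
                ((n + 2 * s - 2).choose n : ℚ) * bernoulli n *
              (M.choose (2 * r - 1) : ℚ)) := Finset.sum_comm
    _ = c * ∑ n ∈ Finset.range (2 * K - 2 * s + 1),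
          (∑ r ∈ Finset.Icc 1 (K - 1),
              ((2 * r - 1).choose (2 * K - 2 * s - n + 1) : ℚ) *
                (M.choose (2 * r - 1) : ℚ)) *
            (((n + 2 * s - 2).choose n : ℚ) * bernoulli n) := by
        rw [Finset.mul_sum]
        refine Finset.sum_congr rfl fun n _ => ?_
        rw [← Finset.mul_sum]
        congr 1
        rw [Finset.sum_mul]
        refine Finset.sum_congr rfl fun r _ => ?_
        ring
    _ = c * ∑ n ∈ Finset.Icc (2 * s' - 2 * s + 2) (2 * K - 2 * s),
          (M.choose (2 * s + n - 2 * s' - 1) : ℚ) *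
            ((n + 2 * s - 2).choose n : ℚ) * 2 ^ (2 * s + n - 2 * s' - 2) * bernoulli n := by
        congr 1
        rw [← Finset.sum_subset
          (show Finset.Icc (2 * s' - 2 * s + 2) (2 * K - 2 * s)
              ⊆ Finset.range (2 * K - 2 * s + 1) by
            intro n hn
            simp only [Finset.mem_Icc, Finset.mem_range] at *
            omega)]
        · -- terms agree on Icc
          refine Finset.sum_congr rfl fun n hn => ?_
          simp only [Finset.mem_Icc] at hn
          rcases Nat.even_or_odd n with hne | hno
          · -- n even: use key_sum
            have hj : Odd (2 * K - 2 * s - n + 1) := by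
              obtain ⟨k, hk⟩ := hne
              refine ⟨K - s - k, by omega⟩
            have hjM : 2 * K - 2 * s - n + 1 < M := by omega
            rw [key_sum K M _ hK (by omega) hj hjM]
            have h1 : M.choose (2 * K - 2 * s - n + 1) = M.choose (2 * s + n - 2 * s' - 1) :=
              Nat.choose_symm_of_eq_add (by omega)
            have h2 : M - (2 * K - 2 * s - n + 1) - 1 = 2 * s + n - 2 * s' - 2 := by omega
            rw [h1, h2]
            ring
          · -- n odd (≥ 3): bernoulli = 0
            rw [bernoulli_odd_zero hno (by omega)]
            ring
        · -- terms vanish outside Icc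
          intro n hn hn'
          simp only [Finset.mem_Icc, Finset.mem_range] at hn hn'
          have hlt : n < 2 * s' - 2 * s + 2 := by omega
          rcases Nat.even_or_odd n with hne | hno
          · -- n even, small: j > M, sum is zero
            rw [zero_sum K M _ (⟨K - s', by omega⟩) (by obtain ⟨k, hk⟩ := hne; omega)]
            ring
          · rcases eq_or_lt_of_le (show 1 ≤ n from hno.pos) with h1 | h1
            · -- n = 1 : j = 2K - 2s ≥ M even
              rw [zero_sum K M _ (⟨K - s', by omega⟩) (by omega)]
              ring
            · rw [bernoulli_odd_zero hno h1]
              ring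
end
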